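/- For the derivation L₁(f) = −Σᵢ xᵢ² ∂f/∂xᵢ on symmetric polynomials, one has L₁(hₘ) = −(m+1)h_{m+1} + p₁hₘ for all m ≥ 0, and L₁(eₘ) = (m+1)e_{m+1} − p₁eₘ. -/

import Mathlib

open MvPolynomial

section Helpers
open Finsupp

variable {σ : Type*} [Fintype σ] [DecidableEq σ]

lemma toFinsupp_cons' (a : σ) (s : Multiset σ) :
    Multiset.toFinsupp (a ::ₘ s) = Finsupp.single a 1 + Multiset.toFinsupp s := by
  ext j
  simp [Multiset.count_cons, Finsupp.single_apply]
  rcases eq_or_ne j a with h | h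
  · simp [h, add_comm]
  · simp [h, Ne.symm h]

lemma prod_map_X (s : Multiset σ) :
    (s.map (X : σ → MvPolynomial σ ℚ)).prod = monomial (Multiset.toFinsupp s) 1 := by
  induction s using Multiset.induction with
  | empty => simp
  | cons a s ih =>
      rw [Multiset.map_cons, Multiset.prod_cons, ih, X, monomial_mul, toFinsupp_cons', one_mul]

lemma hsymm_rep (n : ℕ) :
    hsymm σ ℚ n = ∑ s : Sym σ n, monomial (Multiset.toFinsupp ↑s) 1 := by
  simp [hsymm, prod_map_X]

lemma exp_add (i : σ) (d : σ →₀ ℕ) (h : 0 < d i) :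
    Finsupp.single i 1 + (d - Finsupp.single i 1) = d := by
  ext j
  simp only [Finsupp.add_apply, Finsupp.tsub_apply, Finsupp.single_apply]
  rcases eq_or_ne i j with rfl | hne
  · simp; omega
  · simp [hne]

lemma key_h (i : σ) (d : σ →₀ ℕ) :
    X i * monomial d (1:ℚ) + X i ^ 2 * monomial (d - Finsupp.single i 1) ((d i : ℚ)) =
    monomial (d + Finsupp.single i 1) ((d i : ℚ) + 1) := by
  rcases Nat.eq_zero_or_pos (d i) with h | h
  · simp [h, X, monomial_mul, add_comm]
  · rw [sq, X, monomial_mul, monomial_mul, monomial_mul, add_assoc, exp_add i _ h, add_comm (Finsupp.single i 1) d, ← (monomial _).map_add]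
    congr 1
    push_cast
    ring

lemma sum_sym_cons {M : Type*} [AddCommMonoid M] (n : ℕ) (i : σ) (g : Sym σ (n+1) → M)
    (h0 : ∀ s : Sym σ (n+1), i ∉ s → g s = 0) :
    ∑ s : Sym σ n, g (i ::ₛ s) = ∑ s : Sym σ (n+1), g s := by
  classical
  rw [← Finset.sum_image (f := g) (g := fun s : Sym σ n => i ::ₛ s)
    (fun x _ y _ h => by
      apply Sym.coe_injective
      have := congrArg Sym.toMultiset h
      simpa using this)]
  apply Finset.sum_subset (Finset.subset_univ _)
  intro s' _ hs'
  apply h0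
  intro hi
  exact hs' (Finset.mem_image.2 ⟨s'.erase i hi, Finset.mem_univ _, Sym.cons_erase hi⟩)


lemma h_main (m : ℕ) :
    ((m + 1 : ℕ) : ℚ) • hsymm σ ℚ (m + 1) =
      psum σ ℚ 1 * hsymm σ ℚ m + ∑ i : σ, X i ^ 2 * pderiv i (hsymm σ ℚ m) := by
  classical
  rw [psum, hsymm_rep, hsymm_rep]
  simp only [pow_one, Finset.sum_mul]
  rw [← Finset.sum_add_distrib]
  have step1 : ∀ i : σ,
      (X i * ∑ s : Sym σ m, monomial (Multiset.toFinsupp ↑s) (1:ℚ)) +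
        X i ^ 2 * pderiv i (∑ s : Sym σ m, monomial (Multiset.toFinsupp ↑s) (1:ℚ)) =
      ∑ s' : Sym σ (m+1), monomial (Multiset.toFinsupp ↑s')
        ((Multiset.toFinsupp (↑s' : Multiset σ) i : ℚ)) := by
    intro i
    rw [map_sum, Finset.mul_sum, Finset.mul_sum, ← Finset.sum_add_distrib]
    refine Eq.trans (Finset.sum_congr rfl fun s _ => ?_) (sum_sym_cons m i
      (fun s' => monomial (Multiset.toFinsupp (↑s' : Multiset σ))
        ((Multiset.toFinsupp (↑s' : Multiset σ) i : ℚ)))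
      (fun s' hi => by
        have h0 : Multiset.toFinsupp (↑s' : Multiset σ) i = 0 := by
          rw [Multiset.toFinsupp_apply, Multiset.count_eq_zero]
          exact hi
        simp [h0]))
    rw [pderiv_monomial, one_mul, key_h]
    congr 1
    · rw [Sym.coe_cons, toFinsupp_cons', add_comm]
    · rw [Sym.coe_cons, toFinsupp_cons']
      simp [add_comm]
  rw [Finset.sum_congr rfl fun i _ => step1 i, Finset.sum_comm]
  rw [Finset.smul_sum]
  apply Finset.sum_congr rfl
  intro s' _
  rw [← map_sum (monomial (Multiset.toFinsupp (↑s' : Multiset σ))) _ Finset.univ]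
  rw [show (∑ i : σ, ((Multiset.toFinsupp (↑s' : Multiset σ) i : ℚ))) = ((m+1 : ℕ) : ℚ) from ?_]
  · rw [smul_monomial, smul_eq_mul, mul_one]
  · rw [← Nat.cast_sum]
    congr 1
    simp only [Multiset.toFinsupp_apply]
    rw [Multiset.sum_count_eq_card (fun a _ => Finset.mem_univ a)]
    exact s'.2

lemma Dapp (t : Finset σ) (j : σ) :
    (∑ i ∈ t, Finsupp.single i 1) j = if j ∈ t then 1 else 0 := by
  rw [Finset.sum_apply']
  simp [Finsupp.single_apply]

lemma key_e (i : σ) (t : Finset σ) :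
    X i * monomial (∑ j ∈ t, Finsupp.single j 1) (1:ℚ) -
      X i ^ 2 * monomial ((∑ j ∈ t, Finsupp.single j 1) - Finsupp.single i 1)
        ((((∑ j ∈ t, Finsupp.single j 1) i : ℕ) : ℚ)) =
    if i ∈ t then 0 else monomial ((∑ j ∈ t, Finsupp.single j 1) + Finsupp.single i 1) 1 := by
  by_cases hi : i ∈ t
  · have hd : (∑ j ∈ t, Finsupp.single j 1) i = 1 := by rw [Dapp]; simp [hi]
    rw [if_pos hi, hd, sq, X, monomial_mul, monomial_mul, monomial_mul, add_assoc,
      exp_add i _ (by rw [hd]; norm_num)]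
    rw [sub_eq_zero]
    congr 1
    all_goals norm_num [add_comm]
  · have hd : (∑ j ∈ t, Finsupp.single j 1) i = 0 := by rw [Dapp]; simp [hi]
    rw [if_neg hi, hd, Nat.cast_zero, (monomial _).map_zero, mul_zero, sub_zero, X,
      monomial_mul, one_mul, add_comm]

lemma sum_insert_reindex {M : Type*} [AddCommMonoid M] (n : ℕ) (i : σ) (g : Finset σ → M)
    (h0 : ∀ u, i ∉ u → g u = 0) :
    ∑ t ∈ (Finset.powersetCard n (Finset.univ : Finset σ)).filter (i ∉ ·), g (insert i t) =
      ∑ u ∈ Finset.powersetCard (n+1) (Finset.univ : Finset σ), g u := by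
  classical
  rw [← Finset.sum_image (f := g) (g := fun t => insert i t)
    (fun x hx y hy h => by
      simp only [Finset.mem_coe, Finset.mem_filter] at hx hy
      have := congrArg (fun u => Finset.erase u i) h
      simpa [Finset.erase_insert hx.2, Finset.erase_insert hy.2] using this)]
  apply Finset.sum_subset
  · intro u hu
    simp only [Finset.mem_image, Finset.mem_filter, Finset.mem_powersetCard_univ] at hu ⊢
    obtain ⟨t, ⟨hc, hit⟩, rfl⟩ := hu
    rw [Finset.card_insert_of_notMem hit, hc]
  · intro u hu hui
    by_cases hi : i ∈ u
    · exfalso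
      apply hui
      simp only [Finset.mem_image, Finset.mem_filter, Finset.mem_powersetCard_univ]
      refine ⟨u.erase i, ⟨?_, Finset.notMem_erase i u⟩, Finset.insert_erase hi⟩
      rw [Finset.card_erase_of_mem hi, Finset.mem_powersetCard_univ.mp hu]
      omega
    · exact h0 u hi

lemma e_main (m : ℕ) :
    ((m + 1 : ℕ) : ℚ) • esymm σ ℚ (m + 1) =
      psum σ ℚ 1 * esymm σ ℚ m - ∑ i : σ, X i ^ 2 * pderiv i (esymm σ ℚ m) := by
  classical
  rw [psum, esymm_eq_sum_monomial, esymm_eq_sum_monomial]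
  simp only [pow_one, Finset.sum_mul]
  rw [← Finset.sum_sub_distrib]
  have step1 : ∀ i : σ,
      (X i * ∑ t ∈ Finset.powersetCard m Finset.univ,
          monomial (∑ j ∈ t, Finsupp.single j 1) (1:ℚ)) -
        X i ^ 2 * pderiv i (∑ t ∈ Finset.powersetCard m Finset.univ,
          monomial (∑ j ∈ t, Finsupp.single j 1) (1:ℚ)) =
      ∑ u ∈ Finset.powersetCard (m+1) (Finset.univ : Finset σ),
        (if i ∈ u then monomial (∑ j ∈ u, Finsupp.single j 1) (1:ℚ) else 0) := by
    intro i
    rw [map_sum, Finset.mul_sum, Finset.mul_sum, ← Finset.sum_sub_distrib]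
    rw [← sum_insert_reindex m i
      (fun u => if i ∈ u then monomial (∑ j ∈ u, Finsupp.single j 1) (1:ℚ) else 0)
      (fun u hu => if_neg hu)]
    rw [Finset.sum_filter]
    apply Finset.sum_congr rfl
    intro t _
    rw [pderiv_monomial, one_mul, key_e]
    by_cases hi : i ∈ t
    · simp [hi]
    · rw [if_neg hi, if_pos hi, if_pos (Finset.mem_insert_self i t),
        Finset.sum_insert hi, add_comm]
  rw [Finset.sum_congr rfl fun i _ => step1 i, Finset.sum_comm]
  rw [Finset.smul_sum]
  apply Finset.sum_congr rfl
  intro u hu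
  rw [Finset.sum_ite_mem, Finset.univ_inter, Finset.sum_const,
    Finset.mem_powersetCard_univ.mp hu, Nat.cast_smul_eq_nsmul]

end Helpers

/-- For L₁(f) = -∑ᵢ xᵢ² ∂f/∂xᵢ: L₁(hₘ) = -(m+1)h_{m+1} + p₁hₘ and
L₁(eₘ) = (m+1)e_{m+1} - p₁eₘ, for all m ≥ 0. -/
theorem L1_hsymm_esymm (N : ℕ) (m : ℕ) :
    ((- ∑ i : Fin N, X i ^ 2 * pderiv i (hsymm (Fin N) ℚ m))
        = -(((m + 1 : ℕ) : ℚ)) • hsymm (Fin N) ℚ (m + 1)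
          + psum (Fin N) ℚ 1 * hsymm (Fin N) ℚ m) ∧
    ((- ∑ i : Fin N, X i ^ 2 * pderiv i (esymm (Fin N) ℚ m))
        = (((m + 1 : ℕ) : ℚ)) • esymm (Fin N) ℚ (m + 1)
          - psum (Fin N) ℚ 1 * esymm (Fin N) ℚ m) := by
  constructor
  · have h := h_main (σ := Fin N) m
    rw [smul_eq_C_mul] at h
    rw [neg_smul, smul_eq_C_mul]
    linear_combination h
  · have h := e_main (σ := Fin N) m
    rw [smul_eq_C_mul] at h
    rw [smul_eq_C_mul]
    linear_combination -h
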